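/- Let R be a ring, M a left R-module, and n ≥ 0. Suppose 0 ← M ←∂₀ P_0 ←∂₁ P_1 ← ⋯ ←∂_{n-1} P_{n-1} is an exact sequence (a partial free resolution of M of length n−1) with P_0, …, P_{n-1} finitely generated free left R-modules. Then M is of type FP_n if and only if Ker ∂_{n-1} is a finitely generated R-module. -/

import Mathlib

open Function LinearMap TensorProduct MulOpposite

/-- A left `R`-module `M` is of type `FP n`: there is an exact sequence
`0 ← M ← P₀ ← P₁ ← ⋯ ← Pₙ` with each `Pᵢ` a finitely generated free left `R`-module
(wlog `Pᵢ = Fin rᵢ → R`). -/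
def IsFP (R : Type*) [Ring R] (M : Type*) [AddCommGroup M] [Module R M] (n : ℕ) : Prop :=
  ∃ (r : ℕ → ℕ) (d : ∀ i : ℕ, (Fin (r (i + 1)) → R) →ₗ[R] (Fin (r i) → R))
    (e : (Fin (r 0) → R) →ₗ[R] M),
    Function.Surjective e ∧
    (0 < n → LinearMap.ker e = LinearMap.range (d 0)) ∧
    ∀ i : ℕ, i + 1 < n → LinearMap.ker (d i) = LinearMap.range (d (i + 1))

/-- Left `FP n` of a ring `R` augmented by `ε : R →+* K`:
`K` is a left `R`-module via `ε`, required to be of type `FP n`. -/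
def LeftFP {K : Type*} [CommRing K] (R : Type*) [Ring R] (ε : R →+* K) (n : ℕ) : Prop :=
  letI : Module R K := Module.compHom K ε
  IsFP R K n

/-- Right `FP n`: right `R`-modules are left `Rᵐᵒᵖ`-modules. -/
def RightFP {K : Type*} [CommRing K] (R : Type*) [Ring R] (ε : R →+* K) (n : ℕ) : Prop :=
  LeftFP Rᵐᵒᵖ (ε.fromOpposite fun _ _ => mul_comm _ _) n

/-- Left multiplication by `a` on the first factor of `A ⊗[K] A`
(the free `(A,A)`-bimodule of rank one). -/
noncomputable def lmulT (K A : Type*) [CommRing K] [Ring A] [Algebra K A] (a : A) :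
    (A ⊗[K] A) →ₗ[K] A ⊗[K] A := LinearMap.rTensor A (LinearMap.mulLeft K a)

/-- Right multiplication by `b` on the second factor of `A ⊗[K] A`. -/
noncomputable def rmulT (K A : Type*) [CommRing K] [Ring A] [Algebra K A] (b : A) :
    (A ⊗[K] A) →ₗ[K] A ⊗[K] A := LinearMap.lTensor A (LinearMap.mulRight K b)

/-- An `(A,A)`-bimodule, presented as a `K`-module `M` together with commuting left/right
multiplication operators `lact, ract`, is of type `bi-FP n`: there is an exact sequence
`0 ← M ← F₀ ← ⋯ ← Fₙ` of `(A,A)`-bimodules where each `Fᵢ` is a finitely generated free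
bimodule (wlog `Fᵢ = Fin rᵢ → A ⊗[K] A`) and the maps are bimodule maps, i.e. `K`-linear maps
commuting with the two-sided `A`-actions. -/
def IsBiFP (K A : Type*) [CommRing K] [Ring A] [Algebra K A]
    (M : Type*) [AddCommGroup M] [Module K M]
    (lact ract : A → M →ₗ[K] M) (n : ℕ) : Prop :=
  ∃ (r : ℕ → ℕ)
    (d : ∀ i : ℕ, (Fin (r (i + 1)) → A ⊗[K] A) →ₗ[K] (Fin (r i) → A ⊗[K] A))
    (e : (Fin (r 0) → A ⊗[K] A) →ₗ[K] M),
    (∀ (i : ℕ) (a : A), d i ∘ₗ (lmulT K A a).compLeft (Fin (r (i + 1))) =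
        (lmulT K A a).compLeft (Fin (r i)) ∘ₗ d i) ∧
    (∀ (i : ℕ) (b : A), d i ∘ₗ (rmulT K A b).compLeft (Fin (r (i + 1))) =
        (rmulT K A b).compLeft (Fin (r i)) ∘ₗ d i) ∧
    (∀ a : A, e ∘ₗ (lmulT K A a).compLeft (Fin (r 0)) = lact a ∘ₗ e) ∧
    (∀ b : A, e ∘ₗ (rmulT K A b).compLeft (Fin (r 0)) = ract b ∘ₗ e) ∧
    Function.Surjective e ∧
    (0 < n → LinearMap.ker e = LinearMap.range (d 0)) ∧
    ∀ i : ℕ, i + 1 < n → LinearMap.ker (d i) = LinearMap.range (d (i + 1))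

/-- `A` is of type `bi-FP n`: the bimodule `A` (by left and right multiplication)
admits a resolution by finitely generated free bimodules. -/
def BiFP (K A : Type*) [CommRing K] [Ring A] [Algebra K A] (n : ℕ) : Prop :=
  IsBiFP K A A (fun a => LinearMap.mulLeft K a) (fun b => LinearMap.mulRight K b) n

/-- `A` (augmented by `ε`) is of type weak `bi-FP n`: the bimodule `K`
(with action `a·k·a' = ε(a) k ε(a')`) admits a resolution by f.g. free bimodules. -/
def WeakBiFP (K A : Type*) [CommRing K] [Ring A] [Algebra K A] (ε : A →ₐ[K] K) (n : ℕ) :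
    Prop :=
  IsBiFP K A K (fun a => ε a • LinearMap.id) (fun b => ε b • LinearMap.id) n

/-- The standard augmentation of a monoid algebra, `b ↦ 1` for `b ∈ B`. -/
noncomputable def aug (K B : Type*) [CommRing K] [Monoid B] : MonoidAlgebra K B →ₐ[K] K :=
  MonoidAlgebra.lift K K B 1

section SchanuelAux

universe u w
variable {R : Type u} [Ring R]
theorem exists_finEquiv (X : Type*) [AddCommGroup X] [Module R X]
    [Module.Finite R X] [Module.Free R X] :
    ∃ (k : ℕ), Nonempty ((Fin k → R) ≃ₗ[R] X) := by
  let b := Module.Free.chooseBasis R X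
  exact ⟨_, ⟨(b.equivFun.trans
    (LinearEquiv.funCongrLeft R R (Fintype.equivFin _).symm)).symm⟩⟩

theorem IsFP.finite {X : Type*} [AddCommGroup X] [Module R X] {n : ℕ}
    (h : IsFP R X n) : Module.Finite R X := by
  obtain ⟨r, d, e, hs, -, -⟩ := h
  exact Module.Finite.of_surjective e hs

theorem IsFP.of_equiv {X Y : Type*} [AddCommGroup X] [Module R X]
    [AddCommGroup Y] [Module R Y] {n : ℕ} (h : IsFP R X n) (φ : X ≃ₗ[R] Y) :
    IsFP R Y n := by
  obtain ⟨r, d, e, hs, h0, hi⟩ := h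
  refine ⟨r, d, φ.toLinearMap ∘ₗ e, φ.surjective.comp hs, fun hn => ?_, hi⟩
  rw [LinearMap.ker_comp, LinearEquiv.ker, Submodule.comap_bot]
  exact h0 hn

theorem isFP_congr {X Y : Type*} [AddCommGroup X] [Module R X]
    [AddCommGroup Y] [Module R Y] (φ : X ≃ₗ[R] Y) (n : ℕ) :
    IsFP R X n ↔ IsFP R Y n :=
  ⟨fun h => h.of_equiv φ, fun h => h.of_equiv φ.symm⟩

theorem isFP_zero_iff {X : Type*} [AddCommGroup X] [Module R X] :
    IsFP R X 0 ↔ Module.Finite R X := by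
  refine ⟨IsFP.finite, fun h => ?_⟩
  obtain ⟨k, f, hf⟩ := Module.Finite.exists_fin' R X
  exact ⟨fun _ => k, fun _ => LinearMap.id, f, hf, by omega, by omega⟩

theorem isFP_of_finite_free (X : Type*) [AddCommGroup X] [Module R X]
    [Module.Finite R X] [Module.Free R X] (n : ℕ) : IsFP R X n := by
  obtain ⟨c, ⟨φ⟩⟩ := exists_finEquiv (R := R) X
  refine ⟨fun i => match i with | 0 => c | _+1 => 0,
    fun _ => 0, φ.toLinearMap, φ.surjective, fun _ => ?_, fun i _ => ?_⟩
  · rw [LinearEquiv.ker, LinearMap.range_zero]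
  · rw [LinearMap.ker_zero, LinearMap.range_zero]
    exact Subsingleton.elim _ _
theorem IsFP.peel {M : Type*} [AddCommGroup M] [Module R M] {n : ℕ}
    (h : IsFP R M (n + 1)) :
    ∃ (k : ℕ) (e : (Fin k → R) →ₗ[R] M), Surjective e ∧ IsFP R (LinearMap.ker e) n := by
  obtain ⟨r, d, e, hs, h0, hi⟩ := h
  have hk : LinearMap.ker e = LinearMap.range (d 0) := h0 (Nat.succ_pos n)
  refine ⟨r 0, e, hs, fun i => r (i + 1), fun i => d (i + 1),
    (d 0).codRestrict _ (fun x => hk ▸ LinearMap.mem_range_self _ x), ?_, fun hn => ?_,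
    fun i hn => hi (i + 1) (by omega)⟩
  · rintro ⟨y, hy⟩
    rw [hk] at hy
    obtain ⟨x, hx⟩ := hy
    exact ⟨x, Subtype.ext hx⟩
  · rw [LinearMap.ker_codRestrict]
    exact hi 0 (by omega)

theorem IsFP.splice {M : Type*} [AddCommGroup M] [Module R M] {n k : ℕ}
    (e : (Fin k → R) →ₗ[R] M) (hs : Surjective e)
    (h : IsFP R (LinearMap.ker e) n) : IsFP R M (n + 1) := by
  obtain ⟨r, d, eK, hsK, h0K, hiK⟩ := h
  refine ⟨fun i => match i with | 0 => k | (j+1) => r j,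
    fun i => match i with
      | 0 => (LinearMap.ker e).subtype ∘ₗ eK
      | (j+1) => d j,
    e, hs, fun _ => ?_, fun i hn => ?_⟩
  · show LinearMap.ker e = LinearMap.range ((LinearMap.ker e).subtype ∘ₗ eK)
    rw [LinearMap.range_comp, LinearMap.range_eq_top.mpr hsK, Submodule.map_top,
      Submodule.range_subtype]
  · match i with
    | 0 =>
      show LinearMap.ker ((LinearMap.ker e).subtype ∘ₗ eK) = LinearMap.range (d 0)
      rw [LinearMap.ker_comp, Submodule.ker_subtype, Submodule.comap_bot]
      exact h0K (by omega)
    | (j+1) => exact hiK j (by omega)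


theorem range_prodMap' {A B C D : Type*} [AddCommGroup A] [Module R A]
    [AddCommGroup B] [Module R B] [AddCommGroup C] [Module R C]
    [AddCommGroup D] [Module R D] (f : A →ₗ[R] B) (g : C →ₗ[R] D) :
    LinearMap.range (f.prodMap g) = (LinearMap.range f).prod (LinearMap.range g) := by
  ext ⟨x, y⟩
  simp only [LinearMap.mem_range, Submodule.mem_prod, Prod.exists]
  constructor
  · rintro ⟨a, b, h⟩
    rw [LinearMap.prodMap_apply] at h
    exact ⟨⟨a, congrArg Prod.fst h⟩, ⟨b, congrArg Prod.snd h⟩⟩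
  · rintro ⟨⟨a, ha⟩, ⟨b, hb⟩⟩
    exact ⟨a, b, by simp [ha, hb]⟩

/-- `(Fin (k+l) → R) ≃ₗ (Fin k → R) × (Fin l → R)` -/
noncomputable def finAddEquiv (k l : ℕ) :
    (Fin (k + l) → R) ≃ₗ[R] (Fin k → R) × (Fin l → R) :=
  (LinearEquiv.funCongrLeft R R finSumFinEquiv).trans
    (LinearEquiv.sumArrowLequivProdArrow _ _ R R)

theorem ker_equiv_comp {A B C : Type*} [AddCommGroup A] [Module R A]
    [AddCommGroup B] [Module R B] [AddCommGroup C] [Module R C]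
    (f : A →ₗ[R] B) (ψ : B ≃ₗ[R] C) :
    LinearMap.ker (ψ.toLinearMap ∘ₗ f) = LinearMap.ker f := by
  rw [LinearMap.ker_comp, LinearEquiv.ker, Submodule.comap_bot]


theorem conj_ker {A A' B B' : Type*} [AddCommGroup A] [Module R A]
    [AddCommGroup A'] [Module R A'] [AddCommGroup B] [Module R B]
    [AddCommGroup B'] [Module R B'] (φ : A ≃ₗ[R] A') (ψ : B ≃ₗ[R] B')
    (f : A' →ₗ[R] B) :
    LinearMap.ker (ψ.toLinearMap ∘ₗ f ∘ₗ φ.toLinearMap)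
      = Submodule.comap φ.toLinearMap (LinearMap.ker f) := by
  ext x
  simp [LinearMap.mem_ker, Submodule.mem_comap, LinearEquiv.map_eq_zero_iff]

theorem conj_range {A A' B B' : Type*} [AddCommGroup A] [Module R A]
    [AddCommGroup A'] [Module R A'] [AddCommGroup B] [Module R B]
    [AddCommGroup B'] [Module R B'] (φ : A ≃ₗ[R] A') (ψ : B ≃ₗ[R] B')
    (f : A' →ₗ[R] B) :
    LinearMap.range (ψ.toLinearMap ∘ₗ f ∘ₗ φ.toLinearMap)
      = Submodule.comap ψ.symm.toLinearMap (LinearMap.range f) := by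
  ext y
  simp only [LinearMap.mem_range, Submodule.mem_comap, LinearMap.coe_comp,
    Function.comp_apply, LinearEquiv.coe_coe]
  constructor
  · rintro ⟨x, rfl⟩
    exact ⟨φ x, by simp⟩
  · rintro ⟨z, hz⟩
    exact ⟨φ.symm z, by simp [hz]⟩

theorem IsFP.prod {X Y : Type*} [AddCommGroup X] [Module R X]
    [AddCommGroup Y] [Module R Y] {n : ℕ}
    (hX : IsFP R X n) (hY : IsFP R Y n) : IsFP R (X × Y) n := by
  obtain ⟨r, d, e, hs, h0, hi⟩ := hX
  obtain ⟨r', d', e', hs', h0', hi'⟩ := hY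
  refine ⟨fun i => r i + r' i,
    fun i => (finAddEquiv (r i) (r' i)).symm.toLinearMap ∘ₗ
      ((d i).prodMap (d' i)) ∘ₗ (finAddEquiv (r (i+1)) (r' (i+1))).toLinearMap,
    (e.prodMap e') ∘ₗ (finAddEquiv (r 0) (r' 0)).toLinearMap, ?_, fun hn => ?_, fun i hn => ?_⟩
  · rintro ⟨x, y⟩
    obtain ⟨a, ha⟩ := hs x
    obtain ⟨b, hb⟩ := hs' y
    exact ⟨(finAddEquiv (r 0) (r' 0)).symm (a, b), by simp [ha, hb]⟩
  · rw [LinearMap.ker_comp, conj_range, LinearEquiv.symm_symm]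
    congr 1
    rw [LinearMap.ker_prodMap, h0 hn, h0' hn, range_prodMap']
  · rw [conj_ker, conj_range, LinearEquiv.symm_symm]
    congr 1
    rw [LinearMap.ker_prodMap, hi i hn, hi' i hn, range_prodMap']


noncomputable def splitEquiv {A B : Type*} [AddCommGroup A] [Module R A]
    [AddCommGroup B] [Module R B] (f : A →ₗ[R] B) (s : B →ₗ[R] A)
    (h : f ∘ₗ s = LinearMap.id) : A ≃ₗ[R] ↥(LinearMap.ker f) × B :=
  LinearEquiv.ofLinear
    (((LinearMap.id - s ∘ₗ f).codRestrict (LinearMap.ker f) (fun a => by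
        have hh := LinearMap.congr_fun h (f a)
        simp only [LinearMap.coe_comp, comp_apply, LinearMap.id_apply] at hh
        simp only [LinearMap.mem_ker, LinearMap.sub_apply, LinearMap.id_apply,
          LinearMap.coe_comp, comp_apply, map_sub, hh, sub_self])).prod f)
    ((LinearMap.ker f).subtype ∘ₗ LinearMap.fst R _ B + s ∘ₗ LinearMap.snd R _ B)
    (by
      apply LinearMap.ext
      rintro ⟨⟨a, ha⟩, b⟩
      have hfa : f a = 0 := ha
      have hh := LinearMap.congr_fun h b
      simp only [LinearMap.coe_comp, comp_apply, LinearMap.id_apply] at hh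
      refine Prod.ext (Subtype.ext ?_) ?_ <;>
        simp [LinearMap.codRestrict_apply, hfa, hh]
      )
    (by
      apply LinearMap.ext
      intro a
      have hh := LinearMap.congr_fun h (f a)
      simp only [LinearMap.coe_comp, comp_apply, LinearMap.id_apply] at hh
      simp [LinearMap.codRestrict_apply, sub_add_cancel])

noncomputable def pullbackEquiv {M P F : Type*} [AddCommGroup M] [Module R M]
    [AddCommGroup P] [Module R P] [AddCommGroup F] [Module R F]
    (e : P →ₗ[R] M) (e' : F →ₗ[R] M) (u : P →ₗ[R] F) (hu : e' ∘ₗ u = e) :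
    ↥(LinearMap.ker (e ∘ₗ LinearMap.fst R P F - e' ∘ₗ LinearMap.snd R P F))
      ≃ₗ[R] ↥(LinearMap.ker e') × P := by
  set g := e ∘ₗ LinearMap.fst R P F - e' ∘ₗ LinearMap.snd R P F with hg
  refine LinearEquiv.ofLinear
    ((((LinearMap.snd R P F ∘ₗ (LinearMap.ker g).subtype) -
        u ∘ₗ (LinearMap.fst R P F ∘ₗ (LinearMap.ker g).subtype)).codRestrict
        (LinearMap.ker e') ?_).prod (LinearMap.fst R P F ∘ₗ (LinearMap.ker g).subtype))
    ((((LinearMap.snd R ↥(LinearMap.ker e') P)).prod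
        ((LinearMap.ker e').subtype ∘ₗ LinearMap.fst R _ P +
          u ∘ₗ LinearMap.snd R _ P)).codRestrict (LinearMap.ker g) ?_) ?_ ?_
  · rintro ⟨⟨p, f⟩, hx⟩
    have hpf : e p - e' f = 0 := hx
    have hup := LinearMap.congr_fun hu p
    simp only [LinearMap.coe_comp, comp_apply, LinearMap.id_apply] at hup
    simp only [LinearMap.mem_ker, LinearMap.sub_apply, LinearMap.coe_comp, comp_apply,
      Submodule.coe_subtype, LinearMap.snd_apply, LinearMap.fst_apply, map_sub, hup]
    rw [sub_eq_zero]
    exact (sub_eq_zero.mp hpf).symm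
  · rintro ⟨⟨z, hz⟩, p⟩
    have hz' : e' z = 0 := hz
    have hup := LinearMap.congr_fun hu p
    simp only [LinearMap.coe_comp, comp_apply, LinearMap.id_apply] at hup
    simp only [LinearMap.mem_ker, hg, LinearMap.sub_apply, LinearMap.coe_comp, comp_apply,
      LinearMap.prod_apply, Pi.prod, Function.prod_apply, LinearMap.snd_apply, LinearMap.fst_apply,
      LinearMap.add_apply, Submodule.coe_subtype, map_add, hz', hup]
    abel
  · apply LinearMap.ext
    rintro ⟨⟨z, hz⟩, p⟩
    have hz' : e' z = 0 := hz
    refine Prod.ext (Subtype.ext ?_) ?_ <;>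
      simp [LinearMap.codRestrict_apply]
  · apply LinearMap.ext
    rintro ⟨⟨pf, hx⟩⟩
    refine Subtype.ext ?_
    simp [LinearMap.codRestrict_apply]

theorem key_of_cancel (n : ℕ)
    (hcancel : ∀ (X : Type (max u w)) [AddCommGroup X] [Module R X] (q : ℕ),
      IsFP R (X × (Fin q → R)) n → IsFP R X n)
    (M : Type (max u w)) [AddCommGroup M] [Module R M] (k : ℕ)
    (e : (Fin k → R) →ₗ[R] M) (he : Surjective e) (hM : IsFP R M (n + 1)) :
    IsFP R ↥(LinearMap.ker e) n := by
  obtain ⟨k', e', he', hK'⟩ := hM.peel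
  obtain ⟨u₀, hu₀⟩ := Module.projective_lifting_property e' e he'
  obtain ⟨v₀, hv₀⟩ := Module.projective_lifting_property e e' he
  set P := (Fin k → R)
  set F := (Fin k' → R)
  set g := e ∘ₗ LinearMap.fst R P F - e' ∘ₗ LinearMap.snd R P F with hgdef
  set g' := e' ∘ₗ LinearMap.fst R F P - e ∘ₗ LinearMap.snd R F P with hgdef'
  have Φ := pullbackEquiv e e' u₀ hu₀
  have Φ' := pullbackEquiv e' e v₀ hv₀
  have hmap : Submodule.map (LinearEquiv.prodComm R P F).toLinearMap (LinearMap.ker g)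
      = LinearMap.ker g' := by
    ext ⟨f, p⟩
    rw [Submodule.mem_map_equiv]
    show (f, p).swap ∈ LinearMap.ker g ↔ _
    simp only [LinearMap.mem_ker, hgdef, hgdef', LinearMap.sub_apply, LinearMap.coe_comp,
      comp_apply, LinearMap.fst_apply, LinearMap.snd_apply, Prod.swap_prod_mk,
      Prod.fst_swap, Prod.snd_swap]
    rw [sub_eq_zero, sub_eq_zero, eq_comm]
  have σ : ↥(LinearMap.ker g) ≃ₗ[R] ↥(LinearMap.ker g') :=
    ((LinearEquiv.prodComm R P F).submoduleMap (LinearMap.ker g)).trans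
      (LinearEquiv.ofEq _ _ hmap)
  have h1 : IsFP R (↥(LinearMap.ker e') × P) n := hK'.prod (isFP_of_finite_free P n)
  have h2 : IsFP R ↥(LinearMap.ker g) n := h1.of_equiv Φ.symm
  have h3 : IsFP R ↥(LinearMap.ker g') n := h2.of_equiv σ
  have h4 : IsFP R (↥(LinearMap.ker e) × F) n := h3.of_equiv Φ'
  have h5 : IsFP R (ULift.{w} ↥(LinearMap.ker e) × F) n :=
    h4.of_equiv (LinearEquiv.prodCongr ULift.moduleEquiv.symm (LinearEquiv.refl R F))
  exact (hcancel (ULift.{w} ↥(LinearMap.ker e)) k' h5).of_equiv ULift.moduleEquiv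

noncomputable def prodBotEquiv {A B : Type*} [AddCommGroup A] [Module R A]
    [AddCommGroup B] [Module R B] (p : Submodule R A) :
    ↥(p.prod (⊥ : Submodule R B)) ≃ₗ[R] p :=
  LinearEquiv.ofLinear
    (((LinearMap.fst R A B).comp (p.prod ⊥).subtype).codRestrict p (fun x => x.2.1))
    (((LinearMap.inl R A B).comp p.subtype).codRestrict _
      (fun x => ⟨x.2, Submodule.zero_mem _⟩))
    (by ext x; rfl)
    (by
      ext x
      · rfl
      · exact (x.2.2 : (x : A × B).2 ∈ (⊥ : Submodule R B)).symm ▸ rfl)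

theorem core (n : ℕ) :
    (∀ (X : Type (max u w)) [AddCommGroup X] [Module R X] (q : ℕ),
       IsFP R (X × (Fin q → R)) n → IsFP R X n) ∧
    (∀ (M : Type (max u w)) [AddCommGroup M] [Module R M] (k : ℕ)
       (e : (Fin k → R) →ₗ[R] M), Surjective e → IsFP R M (n + 1) →
       IsFP R ↥(LinearMap.ker e) n) := by
  induction n with
  | zero =>
    have hc : ∀ (X : Type (max u w)) [AddCommGroup X] [Module R X] (q : ℕ),
        IsFP R (X × (Fin q → R)) 0 → IsFP R X 0 := by
      intro X _ _ q h
      haveI := h.finite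
      exact isFP_zero_iff.mpr
        (Module.Finite.of_surjective (LinearMap.fst R X (Fin q → R)) Prod.fst_surjective)
    exact ⟨hc, key_of_cancel 0 hc⟩
  | succ n ih =>
    have hc : ∀ (X : Type (max u w)) [AddCommGroup X] [Module R X] (q : ℕ),
        IsFP R (X × (Fin q → R)) (n + 1) → IsFP R X (n + 1) := by
      intro X _ _ q h
      haveI := h.finite
      haveI : Module.Finite R X :=
        Module.Finite.of_surjective (LinearMap.fst R X (Fin q → R)) Prod.fst_surjective
      obtain ⟨m, g₀, hg₀⟩ := Module.Finite.exists_fin' R X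
      set E := finAddEquiv (R := R) m q with hE
      set h' : (Fin (m + q) → R) →ₗ[R] X × (Fin q → R) :=
        (g₀.prodMap LinearMap.id) ∘ₗ E.toLinearMap with hh'
      have hsurj : Surjective h' := by
        rintro ⟨x, y⟩
        obtain ⟨a, ha⟩ := hg₀ x
        exact ⟨E.symm (a, y), by simp [hh', ha]⟩
      have hker := ih.2 _ _ h' hsurj h
      have hkh : LinearMap.ker h'
          = Submodule.map E.symm.toLinearMap ((LinearMap.ker g₀).prod ⊥) := by
        rw [hh', LinearMap.ker_comp, LinearMap.ker_prodMap, LinearMap.ker_id,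
          Submodule.map_equiv_eq_comap_symm, LinearEquiv.symm_symm]
      rw [hkh] at hker
      have := (hker.of_equiv (E.symm.submoduleMap _).symm).of_equiv
        (prodBotEquiv (LinearMap.ker g₀))
      exact IsFP.splice g₀ hg₀ this
    exact ⟨hc, key_of_cancel (n + 1) hc⟩

theorem isFP_succ_iff_ker {M : Type*} [AddCommGroup M] [Module R M]
    {P : Type*} [AddCommGroup P] [Module R P] [Module.Finite R P] [Module.Free R P]
    (e : P →ₗ[R] M) (he : Surjective e) (n : ℕ) :
    IsFP R M (n + 1) ↔ IsFP R ↥(LinearMap.ker e) n := by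
  obtain ⟨k, ⟨φ⟩⟩ := exists_finEquiv (R := R) P
  constructor
  · intro hM
    set ψ : M ≃ₗ[R] ULift.{u} M := ULift.moduleEquiv.symm with hpsi
    set et : (Fin k → R) →ₗ[R] ULift.{u} M := ψ.toLinearMap ∘ₗ e ∘ₗ φ.toLinearMap with het
    have hsurj : Surjective et := by
      simp only [het, LinearMap.coe_comp, LinearEquiv.coe_coe]
      exact ψ.surjective.comp (he.comp φ.surjective)
    have key := (core (R := R) n).2 _ _ et hsurj (hM.of_equiv ψ)
    have h1 : LinearMap.ker et = Submodule.map φ.symm.toLinearMap (LinearMap.ker e) := by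
      rw [het, conj_ker, Submodule.map_equiv_eq_comap_symm, LinearEquiv.symm_symm]
    rw [h1] at key
    exact key.of_equiv (φ.symm.submoduleMap _).symm
  · intro h
    have hsurj : Surjective (e ∘ₗ φ.toLinearMap) := by
      simp only [LinearMap.coe_comp, LinearEquiv.coe_coe]
      exact he.comp φ.surjective
    refine IsFP.splice (e ∘ₗ φ.toLinearMap) hsurj ?_
    have h1 : LinearMap.ker (e ∘ₗ φ.toLinearMap)
        = Submodule.map φ.symm.toLinearMap (LinearMap.ker e) := by
      rw [LinearMap.ker_comp, Submodule.map_equiv_eq_comap_symm, LinearEquiv.symm_symm]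
    rw [h1]
    exact h.of_equiv (φ.symm.submoduleMap _)


end SchanuelAux

/-- consequence of the Generalised Schanuel Lemma.  Let `M` be a left
`R`-module and suppose `0 ← M ←ε P 0 ←d 0 P 1 ← ⋯ ←d (n-2) P (n-1)` is a partial free
resolution of `M` of length `n - 1` by finitely generated free modules (for `n = 0` this is
no data at all, and the relevant kernel is `M` itself).  Then `M` is of type `FP n` if and
only if the kernel of the last map is finitely generated. -/
theorem isFP_iff_fg_kernel
    (R : Type*) [Ring R] (M : Type*) [AddCommGroup M] [Module R M] (n : ℕ)
    (P : ℕ → Type*) [∀ i, AddCommGroup (P i)] [∀ i, Module R (P i)]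
    (hfin : ∀ i < n, Module.Finite R (P i)) (hfree : ∀ i < n, Module.Free R (P i))
    (e : P 0 →ₗ[R] M) (d : ∀ i : ℕ, P (i + 1) →ₗ[R] P i)
    (hsurj : 0 < n → Function.Surjective e)
    (hex0 : 1 < n → LinearMap.ker e = LinearMap.range (d 0))
    (hexi : ∀ i : ℕ, i + 2 < n → LinearMap.ker (d i) = LinearMap.range (d (i + 1))) :
    IsFP R M n ↔
      (match n with
        | 0 => Module.Finite R M
        | 1 => (LinearMap.ker e).FG
        | (k + 2) => (LinearMap.ker (d k)).FG) := by
  obtain _ | _ | k := n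
  · exact isFP_zero_iff
  · haveI := hfin 0 one_pos
    haveI := hfree 0 one_pos
    rw [isFP_succ_iff_ker e (hsurj one_pos) 0, isFP_zero_iff]
    exact Module.Finite.iff_fg
  · haveI := hfin 0 (by omega)
    haveI := hfree 0 (by omega)
    haveI := hfin 1 (by omega)
    haveI := hfree 1 (by omega)
    have claim : ∀ m j, j + m = k → (IsFP R ↥(LinearMap.ker (d j)) m ↔ (LinearMap.ker (d k)).FG) := by
      intro m
      induction m with
      | zero =>
        intro j hj
        obtain rfl : j = k := by omega
        exact isFP_zero_iff.trans Module.Finite.iff_fg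
      | succ m ih =>
        intro j hj
        haveI := hfin (j + 2) (by omega)
        haveI := hfree (j + 2) (by omega)
        have hmem : ∀ x, d (j + 1) x ∈ LinearMap.ker (d j) := fun x =>
          (hexi j (by omega)) ▸ LinearMap.mem_range_self _ x
        set e' : P (j + 2) →ₗ[R] ↥(LinearMap.ker (d j)) :=
          (d (j + 1)).codRestrict _ hmem with he'
        have hs' : Surjective e' := by
          rintro ⟨y, hy⟩
          rw [hexi j (by omega)] at hy
          obtain ⟨x, hx⟩ := hy
          exact ⟨x, Subtype.ext hx⟩
        rw [isFP_succ_iff_ker e' hs' m, he', LinearMap.ker_codRestrict]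
        exact ih (j + 1) (by omega)
    have hmem0 : ∀ x, d 0 x ∈ LinearMap.ker e := fun x =>
      (hex0 (by omega)) ▸ LinearMap.mem_range_self _ x
    set e1 : P 1 →ₗ[R] ↥(LinearMap.ker e) := (d 0).codRestrict _ hmem0 with he1
    have hs1 : Surjective e1 := by
      rintro ⟨y, hy⟩
      rw [hex0 (by omega)] at hy
      obtain ⟨x, hx⟩ := hy
      exact ⟨x, Subtype.ext hx⟩
    rw [isFP_succ_iff_ker e (hsurj (by omega)) (k + 1),
      isFP_succ_iff_ker e1 hs1 k, he1, LinearMap.ker_codRestrict]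
    exact claim k 0 (by omega)
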